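/- Let X = {0,1}. The solitude-verification family of functions (f_n : X^n → {0,1})_{n≥1} defined by f_n(x) = 1 if |{i : x_i = 1}| = 1 and f_n(x) = 0 otherwise, is not computable with infinite memory. -/

import Mathlib

/-- A finite bidirectional connected network on `n` nodes, with port labelings:
each node `i` has a bijection between its neighbors and the port numbers
`{0, …, deg(i) - 1}`. -/
structure PortNetwork (n : ℕ) where
  adj : Fin n → Fin n → Bool
  symm : ∀ i j, adj i j → adj j i
  loopless : ∀ i, ¬ adj i i
  connected : ∀ i j : Fin n, Relation.ReflTransGen (fun a b => adj a b) i j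
  port : ∀ i : Fin n, {j // adj i j} ≃ Fin (Fintype.card {j // adj i j})

/-- The degree of node `i`. -/
def PortNetwork.deg {n : ℕ} (N : PortNetwork n) (i : Fin n) : ℕ :=
  Fintype.card {j // N.adj i j}

/-- An algorithm: a family of transition functions
`A_d : X × Z_d × Y × M^d → Z_d × Y × M^d`, together with the distinguished
initial ("∅") elements of `Z_d`, `Y`, `M`. -/
structure Algorithm (X Y M : Type) (Z : ℕ → Type) where
  trans : ∀ d : ℕ, X → Z d → Y → (Fin d → M) → Z d × Y × (Fin d → M)
  z0 : ∀ d, Z d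
  y0 : Y
  m0 : M

/-- The synchronous evolution of the network: `A.run N x t i` is the state
`(z_i(t), y_i(t), (m_{i,p}(t))_p)` of node `i` at time `t`, starting from
initial values `x`.  At each round, node `i` receives through its `k`-th port
the message sent by the neighbor `j_k` on that port, namely the message that
`j_k` put on its own port leading back to `i`. -/
def Algorithm.run {X Y M : Type} {Z : ℕ → Type} (A : Algorithm X Y M Z) {n : ℕ}
    (N : PortNetwork n) (x : Fin n → X) :
    ℕ → ∀ i : Fin n, Z (N.deg i) × Y × (Fin (N.deg i) → M)
  | 0 => fun _ => (A.z0 _, A.y0, fun _ => A.m0)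
  | t + 1 => fun i =>
      A.trans (N.deg i) (x i) (A.run N x t i).1 (A.run N x t i).2.1
        (fun k =>
          let j := (N.port i).symm k
          (A.run N x t j.1).2.2 (N.port j.1 ⟨i, N.symm _ _ j.2⟩))

/-- `y` is the final output of the execution of `A` on the network `N` with
initial values `x`. -/
def Algorithm.FinalOutput {X Y M : Type} {Z : ℕ → Type} (A : Algorithm X Y M Z) {n : ℕ}
    (N : PortNetwork n) (x : Fin n → X) (y : Y) : Prop :=
  ∃ t', ∀ t, t' ≤ t → ∀ i, (A.run N x t i).2.1 = y

/-- A family of functions `(f_n : X^n → Y)_{n ≥ 1}` is computable if there is an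
algorithm with `Y`, `M` and all `Z_d` finite which, on every connected network
with ports and every input, produces the final output `f_n(x)`. -/
def ComputableFamily {X Y : Type} (f : ∀ n, (Fin n → X) → Y) : Prop :=
  ∃ (M : Type) (Z : ℕ → Type) (A : Algorithm X Y M Z),
    Finite Y ∧ Finite M ∧ (∀ d, Finite (Z d)) ∧
    ∀ n, 0 < n → ∀ (N : PortNetwork n) (x : Fin n → X),
      A.FinalOutput N x (f n x)

/-- Computability with infinite memory: `Y` and the `Z_d` are allowed to be
countable (the message alphabet `M` stays finite). -/
def ComputableWithInfiniteMemory {X Y : Type} (f : ∀ n, (Fin n → X) → Y) : Prop :=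
  ∃ (M : Type) (Z : ℕ → Type) (A : Algorithm X Y M Z),
    Countable Y ∧ Finite M ∧ (∀ d, Countable (Z d)) ∧
    ∀ n, 0 < n → ∀ (N : PortNetwork n) (x : Fin n → X),
      A.FinalOutput N x (f n x)

section SolitudeAux

/-- Adjacency of the `n`-cycle. -/
def cadj (n : ℕ) [NeZero n] (i j : Fin n) : Bool := decide (j = i + 1) || decide (i = j + 1)

open Fin.NatCast Fin.CommRing in
lemma cadj_connected {n : ℕ} [NeZero n] (i j : Fin n) :
    Relation.ReflTransGen (fun a b => cadj n a b) i j := by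
  have step : ∀ a : Fin n, Relation.ReflTransGen (fun a b => cadj n a b) a (a + 1) :=
    fun a => Relation.ReflTransGen.single (by simp [cadj])
  have h : ∀ (m : ℕ) (a : Fin n),
      Relation.ReflTransGen (fun a b => cadj n a b) a (a + (m : Fin n)) := by
    intro m
    induction m with
    | zero => intro a; simpa using Relation.ReflTransGen.refl
    | succ m ih =>
      intro a
      have : (((m+1 : ℕ) : Fin n)) = (m : Fin n) + 1 := by push_cast; ring
      rw [this, ← add_assoc]
      exact (ih a).trans (step _)
  have := h (j - i).val i
  rwa [Fin.cast_val_eq_self, add_sub_cancel] at this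

def mkPort {n : ℕ} (P : Fin n → Prop) [DecidablePred P] (a b : Fin n) (ha : P a) (hb : P b)
    (hne : a ≠ b) (hall : ∀ j, P j → j = a ∨ j = b) : {j // P j} ≃ Fin 2 where
  toFun j := if j.1 = a then 0 else 1
  invFun k := if k = 0 then ⟨a, ha⟩ else ⟨b, hb⟩
  left_inv j := by
    rcases hall j.1 j.2 with h | h
    · simp [Subtype.ext_iff, h]
    · have : j.1 ≠ a := by rw [h]; exact fun e => hne e.symm
      simp [Subtype.ext_iff, h, this, Ne.symm hne]
  right_inv k := by
    fin_cases k
    · simp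
    · have : b ≠ a := fun e => hne e.symm
      simp [this]

def cycNet (n : ℕ) [NeZero n]
    (hsymm : ∀ i j, cadj n i j → cadj n j i) (hloop : ∀ i, ¬ cadj n i i)
    (h1 : ∀ i : Fin n, cadj n i (i + 1)) (h2 : ∀ i : Fin n, cadj n i (i - 1))
    (hne : ∀ i : Fin n, i + 1 ≠ i - 1)
    (hall : ∀ i j : Fin n, cadj n i j → j = i + 1 ∨ j = i - 1)
    (hcard : ∀ i : Fin n, Fintype.card {j // cadj n i j} = 2) : PortNetwork n where
  adj := cadj n
  symm := hsymm
  loopless := hloop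
  connected := cadj_connected
  port := fun i =>
    (mkPort (fun j => cadj n i j) (i + 1) (i - 1) (h1 i) (h2 i) (hne i) (hall i)).trans
      (finCongr (hcard i).symm)

/-- The triangle network. -/
def N3 : PortNetwork 3 :=
  cycNet 3 (by decide) (by decide) (by decide) (by decide) (by decide) (by decide) (by decide)

/-- The hexagon network (a double cover of the triangle). -/
def N6 : PortNetwork 6 :=
  cycNet 6 (by decide) (by decide) (by decide) (by decide) (by decide) (by decide) (by decide)

/-- The covering map from the hexagon to the triangle. -/
def pmap (i : Fin 6) : Fin 3 := ⟨i.val % 3, by omega⟩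

lemma hdeg63 : ∀ i : Fin 6, N6.deg i = N3.deg (pmap i) := by decide

lemma hpi63 : ∀ (i : Fin 6) (k : Fin (N6.deg i)),
    pmap ((N6.port i).symm k).1 = ((N3.port (pmap i)).symm (Fin.cast (hdeg63 i) k)).1 := by
  decide

lemma hport63 : ∀ (i : Fin 6) (k : Fin (N6.deg i)),
    ((N6.port ((N6.port i).symm k).1) ⟨i, N6.symm _ _ ((N6.port i).symm k).2⟩).val
      = ((N3.port ((N3.port (pmap i)).symm (Fin.cast (hdeg63 i) k)).1)
          ⟨pmap i, N3.symm _ _ ((N3.port (pmap i)).symm (Fin.cast (hdeg63 i) k)).2⟩).val := by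
  decide

section Congruence
variable {X Y M : Type} {Z : ℕ → Type}

lemma heq_fst {d d' : ℕ} (h : d = d') {p : Z d × Y × (Fin d → M)} {p' : Z d' × Y × (Fin d' → M)}
    (hp : HEq p p') : HEq p.1 p'.1 := by subst h; cases hp; rfl

lemma heq_out {d d' : ℕ} (h : d = d') {p : Z d × Y × (Fin d → M)} {p' : Z d' × Y × (Fin d' → M)}
    (hp : HEq p p') : p.2.1 = p'.2.1 := by subst h; cases hp; rfl

lemma heq_msg {d d' : ℕ} (h : d = d') {p : Z d × Y × (Fin d → M)} {p' : Z d' × Y × (Fin d' → M)}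
    (hp : HEq p p') : HEq p.2.2 p'.2.2 := by subst h; cases hp; rfl

lemma trans_heq (A : Algorithm X Y M Z) {d d' : ℕ} (h : d = d') {x x' : X} (hx : x = x')
    {z : Z d} {z' : Z d'} (hz : HEq z z') {y y' : Y} (hy : y = y')
    {m : Fin d → M} {m' : Fin d' → M} (hm : HEq m m') :
    HEq (A.trans d x z y m) (A.trans d' x' z' y' m') := by
  subst h hx hy; cases hz; cases hm; rfl

lemma eval_congr {α : Type} {d d' : ℕ} (h : d = d') {g : Fin d → α} {g' : Fin d' → α}
    (hg : HEq g g') {p : Fin d} {p' : Fin d'} (hp : HEq p p') : g p = g' p' := by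
  subst h; cases hg; cases hp; rfl

lemma finval_heq {d d' : ℕ} (h : d = d') {p : Fin d} {p' : Fin d'} (hv : p.val = p'.val) :
    HEq p p' := by subst h; exact heq_of_eq (Fin.ext hv)

/-- If `π` is a covering map (fiber-preserving on inputs, degrees and ports),
then corresponding nodes have (heterogeneously) equal states at all times. -/
lemma covering_run (A : Algorithm X Y M Z) {n m : ℕ} (N : PortNetwork n) (N' : PortNetwork m)
    (π : Fin n → Fin m) (x : Fin n → X) (x' : Fin m → X)
    (hx : ∀ i, x i = x' (π i))
    (hdeg : ∀ i, N.deg i = N'.deg (π i))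
    (hπ : ∀ (i : Fin n) (k : Fin (N.deg i)),
      π ((N.port i).symm k).1 = ((N'.port (π i)).symm (Fin.cast (hdeg i) k)).1)
    (hport : ∀ (i : Fin n) (k : Fin (N.deg i)),
      ((N.port ((N.port i).symm k).1) ⟨i, N.symm _ _ ((N.port i).symm k).2⟩).val
        = ((N'.port ((N'.port (π i)).symm (Fin.cast (hdeg i) k)).1)
            ⟨π i, N'.symm _ _ ((N'.port (π i)).symm (Fin.cast (hdeg i) k)).2⟩).val) :
    ∀ (t : ℕ) (i : Fin n), HEq (A.run N x t i) (A.run N' x' t (π i)) := by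
  intro t
  induction t with
  | zero =>
    intro i
    show HEq ((A.z0 _, A.y0, fun _ => A.m0) : Z (N.deg i) × Y × (Fin (N.deg i) → M))
      ((A.z0 _, A.y0, fun _ => A.m0) : Z (N'.deg (π i)) × Y × (Fin (N'.deg (π i)) → M))
    have h := hdeg i
    revert h
    generalize N'.deg (π i) = d'
    rintro rfl
    rfl
  | succ t ih =>
    intro i
    show HEq (A.trans (N.deg i) (x i) (A.run N x t i).1 (A.run N x t i).2.1
        (fun k =>
          let j := (N.port i).symm k
          (A.run N x t j.1).2.2 (N.port j.1 ⟨i, N.symm _ _ j.2⟩)))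
      (A.trans (N'.deg (π i)) (x' (π i)) (A.run N' x' t (π i)).1 (A.run N' x' t (π i)).2.1
        (fun k =>
          let j := (N'.port (π i)).symm k
          (A.run N' x' t j.1).2.2 (N'.port j.1 ⟨π i, N'.symm _ _ j.2⟩)))
    refine trans_heq A (hdeg i) (hx i) (heq_fst (hdeg i) (ih i)) (heq_out (hdeg i) (ih i)) ?_
    rw [Fin.heq_fun_iff (hdeg i)]
    intro k
    show (A.run N x t ((N.port i).symm k).1).2.2
        (N.port ((N.port i).symm k).1 ⟨i, N.symm _ _ ((N.port i).symm k).2⟩)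
      = (A.run N' x' t ((N'.port (π i)).symm (Fin.cast (hdeg i) k)).1).2.2
        ((N'.port ((N'.port (π i)).symm (Fin.cast (hdeg i) k)).1)
          ⟨π i, N'.symm _ _ ((N'.port (π i)).symm (Fin.cast (hdeg i) k)).2⟩)
    have hj := hπ i k
    have hd : N.deg ((N.port i).symm k).1
        = N'.deg ((N'.port (π i)).symm (Fin.cast (hdeg i) k)).1 := by
      rw [← hj]; exact hdeg _
    refine eval_congr hd ?_ (finval_heq hd (hport i k))
    have := heq_msg (hdeg ((N.port i).symm k).1) (ih ((N.port i).symm k).1)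
    rw [← hj]
    exact this

end Congruence

/-- Input on the triangle: exactly one `1`. -/
def x3 : Fin 3 → Fin 2 := fun i => if i = 0 then 1 else 0

/-- Its lift to the hexagon: exactly two `1`s. -/
def x6 : Fin 6 → Fin 2 := fun i => x3 (pmap i)

end SolitudeAux

/-- solitude verification (deciding whether exactly one node has
initial value 1) is not computable with infinite memory. -/
theorem solitude_verification_not_computable :
    ¬ ComputableWithInfiniteMemory
      (fun n (x : Fin n → Fin 2) =>
        if (Finset.univ.filter fun i => x i = 1).card = 1 then (1 : Fin 2) else 0) := by
  rintro ⟨M, Z, A, -, -, -, hcomp⟩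
  obtain ⟨t3, h3⟩ := hcomp 3 (by norm_num) N3 x3
  obtain ⟨t6, h6⟩ := hcomp 6 (by norm_num) N6 x6
  have key := heq_out (hdeg63 0)
    (covering_run A N6 N3 pmap x6 x3 (fun _ => rfl) hdeg63 hpi63 hport63 (max t3 t6) 0)
  rw [h6 (max t3 t6) (le_max_right _ _) 0, h3 (max t3 t6) (le_max_left _ _) (pmap 0)] at key
  exact absurd key (by decide)
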